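/- For ℓ ≥ 1 and m ≥ 1, the odd cycle C_{2m+1} is (P_2 + ℓP_1)-free if and only if m ≤ ℓ. -/

import Mathlib

open SimpleGraph

/-- `G` is `k`-vertex-critical: `χ(G) = k` and deleting any vertex decreases `χ`. -/
def IsKVertexCritical {V : Type*} (G : SimpleGraph V) (k : ℕ) : Prop :=
  G.chromaticNumber = k ∧ ∀ v : V, (G.induce ({v}ᶜ : Set V)).chromaticNumber < k

/-- `G` has no induced subgraph isomorphic to `H`. -/
def InducedFree {V W : Type*} (G : SimpleGraph V) (H : SimpleGraph W) : Prop :=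
  ∀ s : Set V, IsEmpty (G.induce s ≃g H)

/-- `s` is an independent set of `G`. -/
def IsIndepSet {V : Type*} (G : SimpleGraph V) (s : Set V) : Prop :=
  s.Pairwise fun a b => ¬ G.Adj a b

/-- The graph `P_2 + ℓ P_1`: an edge together with `ℓ` isolated vertices. -/
def P2lP1 (ℓ : ℕ) : SimpleGraph (Fin (ℓ + 2)) := fromEdgeSet {s(0, 1)}

/-- The graph `P_3 + P_1`: a path on three vertices plus an isolated vertex. -/
def P3P1 : SimpleGraph (Fin 4) := fromEdgeSet {s(0, 1), s(1, 2)}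

/-- The paw: a triangle with a pendant vertex. -/
def paw : SimpleGraph (Fin 4) := fromEdgeSet {s(0, 1), s(0, 2), s(1, 2), s(2, 3)}

/-- The join of two graphs: all edges between the two sides are added. -/
def joinG {α β : Type*} (G : SimpleGraph α) (H : SimpleGraph β) : SimpleGraph (α ⊕ β) where
  Adj x y :=
    match x, y with
    | Sum.inl a, Sum.inl b => G.Adj a b
    | Sum.inr a, Sum.inr b => H.Adj a b
    | Sum.inl _, Sum.inr _ => True
    | Sum.inr _, Sum.inl _ => True
  symm := ⟨by
    rintro (a | a) (b | b) h
    · exact G.adj_symm h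
    · trivial
    · trivial
    · exact H.adj_symm h⟩
  loopless := ⟨by
    rintro (a | a) h
    · exact G.ne_of_adj h rfl
    · exact H.ne_of_adj h rfl⟩


private lemma mod_aux {n a b : ℕ} (hn : 2 ≤ n) (ha : a < n) (hb : b < n) :
    (n - b + a) % n = 1 ↔ (a = b + 1 ∨ (b = n - 1 ∧ a = 0)) := by
  rcases le_or_gt b a with h | h
  · have he : n - b + a = n + (a - b) := by omega
    rw [he, Nat.add_mod_left, Nat.mod_eq_of_lt (by omega)]
    omega
  · rw [Nat.mod_eq_of_lt (by omega)]
    omega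

private lemma cg_adj {n : ℕ} (hn : 2 ≤ n) (u v : Fin n) :
    (cycleGraph n).Adj u v ↔
      ((u.val = v.val + 1 ∨ (v.val = n - 1 ∧ u.val = 0)) ∨
       (v.val = u.val + 1 ∨ (u.val = n - 1 ∧ v.val = 0))) := by
  rw [cycleGraph_adj']
  simp only [Fin.sub_def]
  exact or_congr (mod_aux hn u.isLt v.isLt) (mod_aux hn v.isLt u.isLt)

private lemma indep_le {m : ℕ} (hm : 1 ≤ m) (S : Finset (Fin (2*m+1)))
    (h : ∀ a ∈ S, ∀ b ∈ S, ¬ (cycleGraph (2*m+1)).Adj a b) : S.card ≤ m := by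
  have hn : 2 ≤ 2*m+1 := by omega
  have hdisj : Disjoint S (S.image (· + 1)) := by
    rw [Finset.disjoint_left]
    intro x hxS hximg
    obtain ⟨w, hw, rfl⟩ := Finset.mem_image.mp hximg
    apply h w hw (w+1) hxS
    rw [cg_adj hn]
    have hadd : ((w+1 : Fin (2*m+1))).val = (w.val + 1) % (2*m+1) := by
      rw [Fin.add_def, Fin.val_one']
      rw [Nat.mod_eq_of_lt (a := 1) (by omega)]
    rcases Nat.lt_or_ge (w.val + 1) (2*m+1) with hlt | hge
    · right; left; rw [hadd, Nat.mod_eq_of_lt hlt]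
    · have hw2 : w.val = 2*m := by have := w.isLt; omega
      right; right
      refine ⟨by omega, ?_⟩
      rw [hadd, hw2]
      simp [Nat.mod_self]
  have hinj : Function.Injective (fun x : Fin (2*m+1) => x + 1) :=
    add_left_injective 1
  have hcard := Finset.card_union_of_disjoint hdisj
  have himg : (S.image (· + 1)).card = S.card := Finset.card_image_of_injective _ hinj
  have hle : (S ∪ S.image (· + 1)).card ≤ 2*m+1 := by
    have := Finset.card_le_univ (S ∪ S.image (· + 1))
    simpa using this
  omega

private lemma P2lP1_adj {ℓ : ℕ} (a b : Fin (ℓ+2)) :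
    (P2lP1 ℓ).Adj a b ↔ (a = 0 ∧ b = 1) ∨ (a = 1 ∧ b = 0) := by
  have h01 : (0 : Fin (ℓ+2)) ≠ 1 := by
    simp [Fin.ext_iff]
  rw [P2lP1, fromEdgeSet_adj, Set.mem_singleton_iff, Sym2.eq_iff]
  constructor
  · rintro ⟨(⟨rfl, rfl⟩ | ⟨rfl, rfl⟩), _⟩
    · left; exact ⟨rfl, rfl⟩
    · right; exact ⟨rfl, rfl⟩
  · rintro (⟨rfl, rfl⟩ | ⟨rfl, rfl⟩)
    · exact ⟨Or.inl ⟨rfl, rfl⟩, h01⟩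
    · exact ⟨Or.inr ⟨rfl, rfl⟩, h01.symm⟩

theorem odd_cycle_P2lP1_free_iff (ℓ m : ℕ) (hℓ : 1 ≤ ℓ) (hm : 1 ≤ m) :
    InducedFree (cycleGraph (2 * m + 1)) (P2lP1 ℓ) ↔ m ≤ ℓ := by
  constructor
  · intro hfree
    by_contra hlt
    push_neg at hlt
    -- ℓ < m : construct an induced copy
    have hgvlt : ∀ i : Fin (ℓ+2), (if i.val ≤ 1 then i.val else 2*i.val - 1) < 2*m+1 := by
      intro i
      have := i.isLt
      split_ifs <;> omega
    set g : Fin (ℓ+2) → Fin (2*m+1) :=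
      fun i => ⟨if i.val ≤ 1 then i.val else 2*i.val - 1, hgvlt i⟩ with hg
    have hginj : Function.Injective g := by
      intro a b hab
      have hv : (g a).val = (g b).val := congrArg Fin.val hab
      have ha := a.isLt; have hb := b.isLt
      apply Fin.ext
      simp only [hg] at hv
      split_ifs at hv <;> omega
    have hkey : ∀ a b : Fin (ℓ+2),
        (cycleGraph (2*m+1)).Adj (g a) (g b) ↔ ((a = 0 ∧ b = 1) ∨ (a = 1 ∧ b = 0)) := by
      intro a b
      rw [cg_adj (by omega)]
      have ha := a.isLt; have hb := b.isLt
      have h0 : ∀ c : Fin (ℓ+2), (c = 0 ↔ c.val = 0) := by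
        intro c; rw [Fin.ext_iff]; simp
      have h1 : ∀ c : Fin (ℓ+2), (c = 1 ↔ c.val = 1) := by
        intro c; rw [Fin.ext_iff]; simp [Fin.val_one]
      rw [h0 a, h0 b, h1 a, h1 b]
      simp only [hg]
      split_ifs <;> omega
    have e : P2lP1 ℓ ≃g (cycleGraph (2*m+1)).induce (Set.range g) :=
      { toEquiv := Equiv.ofInjective g hginj
        map_rel_iff' := by
          intro a b
          rw [P2lP1_adj]
          exact (hkey a b) }
    exact (hfree (Set.range g)).false e.symm
  · intro hml s
    refine ⟨fun e => ?_⟩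
    set f : Fin (ℓ+2) → Fin (2*m+1) := fun i => ((e.symm i : s) : Fin (2*m+1)) with hf
    have hfinj : Function.Injective f := by
      intro a b hab
      exact e.symm.injective (Subtype.ext hab)
    set S : Finset (Fin (2*m+1)) :=
      (Finset.univ.filter fun i : Fin (ℓ+2) => i ≠ 0).image f with hS
    have hScard : S.card = ℓ + 1 := by
      rw [hS, Finset.card_image_of_injective _ hfinj, Finset.filter_ne',
        Finset.card_erase_of_mem (Finset.mem_univ _)]
      simp
    have hind : ∀ a ∈ S, ∀ b ∈ S, ¬ (cycleGraph (2*m+1)).Adj a b := by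
      intro a ha b hb hadj
      rw [hS, Finset.mem_image] at ha hb
      obtain ⟨i, hi, rfl⟩ := ha
      obtain ⟨j, hj, rfl⟩ := hb
      rw [Finset.mem_filter] at hi hj
      have hadj' : ((cycleGraph (2*m+1)).induce s).Adj (e.symm i) (e.symm j) := hadj
      rw [e.symm.map_rel_iff, P2lP1_adj] at hadj'
      rcases hadj' with ⟨h0, _⟩ | ⟨_, h0⟩
      · exact hi.2 h0
      · exact hj.2 h0
    have := indep_le hm S hind
    omega
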